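/- Under assumptions (A0) and (A1), over the region S_{β^{l0}} containing the LTS estimator, β̂^n_lts satisfies the system of normal equations Σ_{i=1}^n (y_i - w_i'β) w_i 1(r_i(β)² ≤ r²_{h:n}(β)) = 0. -/
import Mathlib


open MeasureTheory Finset Metric
open scoped ENNReal

noncomputable section

/-- The i-th residual `r_i(β) = y_i - w_i'β`. -/
def res {n p : ℕ} (w : Fin n → Fin p → ℝ) (y : Fin n → ℝ) (β : Fin p → ℝ) (i : Fin n) : ℝ :=
  y i - ∑ j, w i j * β j

/-- The empirical LTS objective `O^n(β) = (1/n) ∑_{i=1}^h r²_{i:n}(β)`: the sum of the `h`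
smallest squared residuals, i.e. the minimum over all size-`h` index sets of the sum of the
corresponding squared residuals. -/
def Oemp {n p : ℕ} (w : Fin n → Fin p → ℝ) (y : Fin n → ℝ) (h : ℕ) (β : Fin p → ℝ) : ℝ :=
  (1 / (n : ℝ)) *
    sInf ((fun s : Finset (Fin n) => ∑ i ∈ s, (res w y β i) ^ 2) '' {s | s.card = h})

/-- `k` enumerates the indices of the `h` smallest squared residuals at `β`,
in increasing order. -/
def IsHSeq {n p : ℕ} (w : Fin n → Fin p → ℝ) (y : Fin n → ℝ) {h : ℕ}
    (k : Fin h → Fin n) (β : Fin p → ℝ) : Prop :=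
  Function.Injective k ∧
    (∀ i j : Fin h, i ≤ j → (res w y β (k i)) ^ 2 ≤ (res w y β (k j)) ^ 2) ∧
    (∀ m : Fin n, m ∉ Set.range k → ∀ i : Fin h, (res w y β (k i)) ^ 2 ≤ (res w y β m) ^ 2)

/-- The region `S_{β^l}`: the set of `β` whose (unique) `h`-index sequence is `k`. -/
def Sreg {n p : ℕ} (w : Fin n → Fin p → ℝ) (y : Fin n → ℝ) {h : ℕ}
    (k : Fin h → Fin n) : Set (Fin p → ℝ) :=
  {β | IsHSeq w y k β ∧ ∀ k' : Fin h → Fin n, IsHSeq w y k' β → k' = k}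

/-- Assumption (A1): the design matrix `X_n` and each of its `h`-row submatrices
have full rank `p`. -/
def A1 {n p : ℕ} (w : Fin n → Fin p → ℝ) (h : ℕ) : Prop :=
  (Matrix.of w).rank = p ∧
    ∀ s : Finset (Fin n), s.card = h →
      ((Matrix.of w).submatrix (fun i : {x // x ∈ s} => (i : Fin n)) id).rank = p

/-- Assumption (A0): for every `β`, `W(β) = (y - w'β)²` has a density
(its law is absolutely continuous w.r.t. Lebesgue measure). -/
def A0 {Ω : Type*} [MeasurableSpace Ω] (P : Measure Ω) {n p : ℕ}
    (w : Ω → Fin n → Fin p → ℝ) (y : Ω → Fin n → ℝ) : Prop :=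
  ∀ (β : Fin p → ℝ) (i : Fin n),
    (P.map fun ω => (res (w ω) (y ω) β i) ^ 2) ≪ (volume : Measure ℝ)

/-- The h-th smallest squared residual `r²_{h:n}(β)`. -/
def hthSqRes {n p : ℕ} (w : Fin n → Fin p → ℝ) (y : Fin n → ℝ) (h : ℕ)
    (β : Fin p → ℝ) : ℝ :=
  sInf {t : ℝ | h ≤ (Finset.univ.filter fun i : Fin n => (res w y β i) ^ 2 ≤ t).card}

lemma lts_strict_out {n p hn : ℕ} {w : Fin n → Fin p → ℝ} {y : Fin n → ℝ}
    {k : Fin hn → Fin n} {βh : Fin p → ℝ} (h1 : 1 ≤ hn) (hS : βh ∈ Sreg w y k) :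
    ∀ m, m ∉ Set.range k → ∀ i, (res w y βh (k i))^2 < (res w y βh m)^2 := by
  obtain ⟨⟨hinj, hmono, hout⟩, huniq⟩ := hS
  intro m hm i
  rcases lt_or_eq_of_le (hout m hm i) with h | h
  · exact h
  exfalso
  set last : Fin hn := ⟨hn - 1, by omega⟩ with hlast
  have hlastle : ∀ j : Fin hn, j ≤ last := fun j => by
    have := j.isLt; simp only [hlast, Fin.le_def]; omega
  have heqlast : (res w y βh (k last))^2 = (res w y βh m)^2 := by
    have ha := hmono i last (hlastle i)
    have hb := hout m hm last
    linarith
  set k' := Function.update k last m with hk'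
  have hk'app : ∀ j, k' j = if j = last then m else k j := fun j => Function.update_apply k last m j
  have hne : k' ≠ k := by
    intro hEq
    apply hm
    refine ⟨last, ?_⟩
    rw [← hEq, hk'app]; simp
  apply hne
  apply huniq
  refine ⟨?_, ?_, ?_⟩
  · intro a b hab
    rw [hk'app, hk'app] at hab
    by_cases ha : a = last <;> by_cases hb : b = last
    · rw [ha, hb]
    · simp only [ha, hb, if_true, if_false] at hab
      exact absurd ⟨b, hab.symm⟩ hm
    · simp only [ha, hb, if_true, if_false] at hab
      exact absurd ⟨a, hab⟩ hm
    · simp only [ha, hb, if_false] at hab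
      exact hinj hab
  · intro a b hab
    rw [hk'app, hk'app]
    by_cases hb : b = last
    · simp only [hb, if_true]
      by_cases ha : a = last
      · simp [ha]
      · simp only [ha, if_false]
        rw [← heqlast]
        exact hmono a last (hlastle a)
    · have ha : a ≠ last := by
        intro h'
        rw [h'] at hab
        exact hb (le_antisymm (hlastle b) hab)
      simp only [ha, hb, if_false]
      exact hmono a b hab
  · intro m' hm' i'
    have hm'k : m' = k last ∨ m' ∉ Set.range k := by
      by_cases h'' : m' ∈ Set.range k
      · obtain ⟨j, hj⟩ := h''
        left
        by_cases hjl : j = last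
        · rw [← hj, hjl]
        · exact absurd ⟨j, by rw [hk'app]; simp only [hjl, if_false]; exact hj⟩ hm'
      · right; exact h''
    rw [hk'app]
    by_cases hi' : i' = last
    · simp only [hi', if_true]
      rcases hm'k with h'' | h''
      · rw [h'', ← heqlast]
      · rw [← heqlast]; exact hout m' h'' last
    · simp only [hi', if_false]
      rcases hm'k with h'' | h''
      · rw [h'']; exact hmono i' last (hlastle i')
      · exact hout m' h'' i'


open scoped Classical in
theorem main_det {n p hn : ℕ} (w : Fin n → Fin p → ℝ) (y : Fin n → ℝ)
    (hn1 : 1 ≤ hn) (hnn : hn < n) (βh : Fin p → ℝ) (k : Fin hn → Fin n)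
    (hinj : Function.Injective k)
    (hmono : ∀ i j : Fin hn, i ≤ j → (res w y βh (k i)) ^ 2 ≤ (res w y βh (k j)) ^ 2)
    (hstrict : ∀ m, m ∉ Set.range k → ∀ i, (res w y βh (k i))^2 < (res w y βh m)^2)
    (hmin : ∀ β : Fin p → ℝ, Oemp w y hn βh ≤ Oemp w y hn β) (j : Fin p) :
    (∑ i : Fin n, if (res w y βh i) ^ 2 ≤ hthSqRes w y hn βh
      then res w y βh i * w i j else 0) = 0 := by
  have hn0 : 0 < n := by omega
  set last : Fin hn := ⟨hn - 1, by omega⟩ with hlast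
  have hlastle : ∀ i : Fin hn, i ≤ last := fun i => by
    have := i.isLt; simp only [hlast, Fin.le_def]; omega
  set S : Finset (Fin n) := Finset.image k Finset.univ with hSdef
  have hcardS : S.card = hn := by
    rw [hSdef, Finset.card_image_of_injective _ hinj, Finset.card_univ, Fintype.card_fin]
  have hmemS : ∀ i : Fin n, i ∈ S ↔ i ∈ Set.range k := by
    intro i
    simp [hSdef, Set.mem_range, eq_comm]
  have hSle : ∀ i ∈ S, (res w y βh i)^2 ≤ (res w y βh (k last))^2 := by
    intro i hi
    obtain ⟨a, ha⟩ := (hmemS i).mp hi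
    rw [← ha]
    exact hmono a last (hlastle a)
  have hout' : ∀ m, m ∉ S → (res w y βh (k last))^2 < (res w y βh m)^2 := by
    intro m hm
    exact hstrict m (fun h => hm ((hmemS m).mpr h)) last
  -- compute hthSqRes
  have hklS : k last ∈ S := (hmemS _).mpr ⟨last, rfl⟩
  have hth : hthSqRes w y hn βh = (res w y βh (k last))^2 := by
    have hset : {t : ℝ | hn ≤ (Finset.univ.filter fun i : Fin n => (res w y βh i) ^ 2 ≤ t).card}
        = Set.Ici ((res w y βh (k last))^2) := by
      ext t
      simp only [Set.mem_setOf_eq, Set.mem_Ici]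
      constructor
      · intro ht
        by_contra hlt
        push_neg at hlt
        have hsub : (Finset.univ.filter fun i : Fin n => (res w y βh i) ^ 2 ≤ t)
            ⊆ S.erase (k last) := by
          intro i hi
          rw [Finset.mem_filter] at hi
          have hiS : i ∈ S := by
            by_contra hiS
            have := hout' i hiS
            linarith [hi.2]
          refine Finset.mem_erase.mpr ⟨?_, hiS⟩
          intro hkl
          rw [hkl] at hi
          linarith [hi.2]
        have hcle := Finset.card_le_card hsub
        rw [Finset.card_erase_of_mem hklS, hcardS] at hcle
        omega
      · intro ht
        have hsub : S ⊆ Finset.univ.filter fun i : Fin n => (res w y βh i) ^ 2 ≤ t := by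
          intro i hi
          simp only [Finset.mem_filter, Finset.mem_univ, true_and]
          exact le_trans (hSle i hi) ht
        calc hn = S.card := hcardS.symm
          _ ≤ _ := Finset.card_le_card hsub
    rw [hthSqRes, hset, csInf_Ici]
  -- the indicator set is S
  have hfilter : (Finset.univ.filter fun i : Fin n =>
      (res w y βh i) ^ 2 ≤ hthSqRes w y hn βh) = S := by
    ext i
    simp only [Finset.mem_filter, Finset.mem_univ, true_and, hth]
    constructor
    · intro hi
      by_contra hiS
      exact absurd hi (not_le.mpr (hout' i hiS))
    · intro hi
      exact hSle i hi
  rw [← Finset.sum_filter, hfilter]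
  -- now prove the normal equation over S
  -- minimality of the fixed-subset objective
  have hnonempty : ∀ β : Fin p → ℝ,
      ((fun s : Finset (Fin n) => ∑ i ∈ s, (res w y β i) ^ 2) '' {s | s.card = hn}).Nonempty := by
    intro β
    obtain ⟨s, -, hscard⟩ := Finset.exists_subset_card_eq
      (s := (Finset.univ : Finset (Fin n))) (n := hn)
      (by rw [Finset.card_univ, Fintype.card_fin]; omega)
    exact ⟨_, ⟨s, hscard, rfl⟩⟩
  have hbdd : ∀ β : Fin p → ℝ,
      BddBelow ((fun s : Finset (Fin n) => ∑ i ∈ s, (res w y β i) ^ 2) '' {s | s.card = hn}) :=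
    fun β => (Set.Finite.image _ (Set.toFinite _)).bddBelow
  have keymin : ∀ s : Finset (Fin n), s.card = hn →
      (∑ i ∈ S, (res w y βh i)^2) ≤ ∑ i ∈ s, (res w y βh i)^2 := by
    intro s hs
    have hsplit1 := Finset.sum_inter_add_sum_sdiff S s (fun i => (res w y βh i)^2)
    have hsplit2 := Finset.sum_inter_add_sum_sdiff s S (fun i => (res w y βh i)^2)
    have hcards : (S \ s).card = (s \ S).card := Finset.card_sdiff_comm (by rw [hcardS, hs])
    have hle1 : (∑ i ∈ S \ s, (res w y βh i)^2) ≤ (S \ s).card • ((res w y βh (k last))^2) :=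
      Finset.sum_le_card_nsmul _ _ _ (fun x hx => hSle x (Finset.mem_sdiff.mp hx).1)
    have hle2 : (s \ S).card • ((res w y βh (k last))^2) ≤ ∑ i ∈ s \ S, (res w y βh i)^2 :=
      Finset.card_nsmul_le_sum _ _ _ (fun x hx => le_of_lt (hout' x (Finset.mem_sdiff.mp hx).2))
    have hinter : (∑ i ∈ S ∩ s, (res w y βh i)^2) = ∑ i ∈ s ∩ S, (res w y βh i)^2 := by
      rw [Finset.inter_comm]
    rw [hcards] at hle1
    linarith
  have hgle : ∀ β : Fin p → ℝ,
      (∑ i ∈ S, (res w y βh i)^2) ≤ ∑ i ∈ S, (res w y β i)^2 := by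
    intro β
    have h1 : sInf ((fun s : Finset (Fin n) => ∑ i ∈ s, (res w y βh i) ^ 2) '' {s | s.card = hn})
        = ∑ i ∈ S, (res w y βh i)^2 := by
      apply le_antisymm
      · exact csInf_le (hbdd βh) ⟨S, hcardS, rfl⟩
      · apply le_csInf (hnonempty βh)
        rintro b ⟨s, hs, rfl⟩
        exact keymin s hs
    have h2 : sInf ((fun s : Finset (Fin n) => ∑ i ∈ s, (res w y β i) ^ 2) '' {s | s.card = hn})
        ≤ ∑ i ∈ S, (res w y β i)^2 := csInf_le (hbdd β) ⟨S, hcardS, rfl⟩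
    have h3 := hmin β
    rw [Oemp, Oemp] at h3
    have h1n : (0:ℝ) < 1 / n := by positivity
    have h4 := le_of_mul_le_mul_left h3 h1n
    linarith
  -- residual shift
  have hres : ∀ (t : ℝ) (i : Fin n),
      res w y (fun j' => βh j' + if j' = j then t else 0) i = res w y βh i - t * w i j := by
    intro t i
    simp only [res, mul_add, Finset.sum_add_distrib, mul_ite, mul_zero,
      Finset.sum_ite_eq', Finset.mem_univ, if_true]
    ring
  have hexp : ∀ t : ℝ, (∑ i ∈ S, (res w y (fun j' => βh j' + if j' = j then t else 0) i)^2)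
      = (∑ i ∈ S, (res w y βh i)^2) - 2*t*(∑ i ∈ S, res w y βh i * w i j)
        + t^2*(∑ i ∈ S, (w i j)^2) := by
    intro t
    rw [Finset.mul_sum, Finset.mul_sum, ← Finset.sum_sub_distrib, ← Finset.sum_add_distrib]
    apply Finset.sum_congr rfl
    intro i _
    rw [hres t i]
    ring
  set B : ℝ := ∑ i ∈ S, res w y βh i * w i j with hB
  set C : ℝ := ∑ i ∈ S, (w i j)^2 with hC
  have hCnn : 0 ≤ C := Finset.sum_nonneg (fun i _ => sq_nonneg _)
  have hq : ∀ t : ℝ, 0 ≤ -2*t*B + t^2*C := by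
    intro t
    have := hgle (fun j' => βh j' + if j' = j then t else 0)
    rw [hexp t] at this
    linarith
  have hC1 : (0:ℝ) < C + 1 := by linarith
  set t₀ : ℝ := B / (C + 1) with ht₀
  have hBt : B = t₀ * (C + 1) := by
    rw [ht₀]; field_simp
  have key := hq t₀
  rw [hBt] at key
  have ht2 : t₀^2 ≤ 0 := by nlinarith [key, hCnn, sq_nonneg t₀]
  have ht0 : t₀ = 0 := by
    have := le_antisymm ht2 (sq_nonneg t₀)
    exact pow_eq_zero_iff (by norm_num) |>.mp this
  rw [hBt, ht0, zero_mul]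


open scoped Classical in
/-- Theorem 2.1 (ii): under (A0) and (A1), almost surely, over the region `S_{β^{l₀}}`
containing the LTS estimator, the LTS estimator satisfies the normal equations
`∑_{i=1}^n (y_i - w_i'β) w_i 1(r_i(β)² ≤ r²_{h:n}(β)) = 0`. -/
theorem stmt_4 {Ω : Type*} [MeasurableSpace Ω] (P : Measure Ω) [IsProbabilityMeasure P]
    (n p hn : ℕ) (α c : ℝ) (hc : 1 / 2 < c ∧ c < 1) (hα : α ∈ Set.Icc (1 / 2) c)
    (hhn : hn = ⌊α * n⌋₊ + 1) (hp : 2 ≤ p) (hpn : 2 * p < n) (hn2 : n ≤ 2 * hn)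
    (hnn : hn < n)
    (w : Ω → Fin n → Fin p → ℝ) (y : Ω → Fin n → ℝ)
    (hmeas : ∀ i : Fin n, Measurable fun ω => (w ω i, y ω i))
    (hw1 : ∀ ω i, w ω i ⟨0, by omega⟩ = 1)
    (hA0 : A0 P w y) (hA1 : ∀ ω, A1 (w ω) hn) :
    ∀ᵐ ω ∂P, ∀ (βh : Fin p → ℝ) (k : Fin hn → Fin n),
      (∀ β : Fin p → ℝ, Oemp (w ω) (y ω) hn βh ≤ Oemp (w ω) (y ω) hn β) →
      βh ∈ Sreg (w ω) (y ω) k →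
      ∀ j : Fin p,
        (∑ i : Fin n, if (res (w ω) (y ω) βh i) ^ 2 ≤ hthSqRes (w ω) (y ω) hn βh
          then res (w ω) (y ω) βh i * w ω i j else 0) = 0 := by
  refine Filter.Eventually.of_forall fun ω => ?_
  intro βh k hmin hS j
  have hn1 : 1 ≤ hn := by omega
  have hstrict := lts_strict_out hn1 hS
  obtain ⟨⟨hinj, hmono, hout⟩, -⟩ := hS
  exact main_det (w ω) (y ω) hn1 hnn βh k hinj hmono hstrict hmin j
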